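/- Let α be an admissible spacelike curve in the pseudo-Galilean space G¹₃ on an interval I, with continuously differentiable curvature κ, nowhere-vanishing torsion τ, and Frenet frame {T, N, B}, and let m₀, m₁, m₂ : I → ℝ be differentiable with α = m₀T + m₁N + m₂B on I, so that m₀(s) = s + c₀ for a constant c₀; assume s + c₀ ≠ 0 on I. If α is of constant-ratio, i.e. m₀(s)² = c₃(m₂(s)² − m₁(s)²) on I for some nonzero constant c₃, then for all s ∈ I: m₁(s) = 1/(c₃κ(s)), m₂(s) = (κ'(s) − c₃κ(s)³(s + c₀))/(c₃κ(s)²τ(s)), and the function s ↦ (κ'(s) − c₃κ(s)³(s + c₀))/(c₃κ(s)²τ(s)) is differentiable with derivative equal to −τ(s)/(c₃κ(s)). -/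

import Mathlib

/-- For an admissible spacelike curve of constant-ratio in `G¹₃`
(i.e. `m₀² = c₃ (m₂² - m₁²)` for a nonzero constant `c₃`), with continuously
differentiable curvature `κ`, nowhere-vanishing torsion `τ`, `m₀ s = s + c₀ ≠ 0` on `I`,
the components satisfy `m₁ = 1/(c₃ κ)`, `m₂ = (κ' - c₃ κ³ (s + c₀))/(c₃ κ² τ)`, and this
last function has derivative `-τ/(c₃ κ)`. -/
theorem stmt_5
    (I : Set ℝ) (hIopen : IsOpen I) (hIconv : Convex ℝ I)
    (hInondeg : ∃ a ∈ I, ∃ b ∈ I, a ≠ b)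
    (y z : ℝ → ℝ)
    (hy : ContDiffOn ℝ 3 y I) (hz : ContDiffOn ℝ 3 z I)
    (hadm : ∀ s ∈ I, (deriv (deriv y) s) ^ 2 - (deriv (deriv z) s) ^ 2 ≠ 0)
    (κ τ : ℝ → ℝ)
    (hκ : ∀ s ∈ I, κ s = Real.sqrt |(deriv (deriv y) s) ^ 2 - (deriv (deriv z) s) ^ 2|)
    (hτ : ∀ s ∈ I, τ s =
      (deriv (deriv y) s * deriv (deriv (deriv z)) s -
        deriv (deriv (deriv y)) s * deriv (deriv z) s) / (κ s) ^ 2)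
    (hκC1 : ContDiffOn ℝ 1 κ I)
    (hτ0 : ∀ s ∈ I, τ s ≠ 0)
    (ε : ℝ) (hε : ε = 1 ∨ ε = -1)
    (hεdef : ∀ s ∈ I, |(deriv (deriv y) s) ^ 2 - (deriv (deriv z) s) ^ 2| =
      ε * ((deriv (deriv y) s) ^ 2 - (deriv (deriv z) s) ^ 2))
    (T N B : ℝ → ℝ × ℝ × ℝ)
    (hT : ∀ s ∈ I, T s = (1, deriv y s, deriv z s))
    (hN : ∀ s ∈ I, N s = (0, deriv (deriv y) s / κ s, deriv (deriv z) s / κ s))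
    (hB : ∀ s ∈ I, B s = (0, ε * deriv (deriv z) s / κ s, ε * deriv (deriv y) s / κ s))
    (m₀ m₁ m₂ : ℝ → ℝ)
    (hm₀ : ∀ s ∈ I, DifferentiableAt ℝ m₀ s)
    (hm₁ : ∀ s ∈ I, DifferentiableAt ℝ m₁ s)
    (hm₂ : ∀ s ∈ I, DifferentiableAt ℝ m₂ s)
    (hdecomp : ∀ s ∈ I,
      ((s, y s, z s) : ℝ × ℝ × ℝ) = m₀ s • T s + m₁ s • N s + m₂ s • B s)
    (c₀ : ℝ) (hm₀eq : ∀ s ∈ I, m₀ s = s + c₀)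
    (hne : ∀ s ∈ I, s + c₀ ≠ 0)
    (c₃ : ℝ) (hc₃ : c₃ ≠ 0)
    (hratio : ∀ s ∈ I, (m₀ s) ^ 2 = c₃ * ((m₂ s) ^ 2 - (m₁ s) ^ 2)) :
    ∀ s ∈ I,
      m₁ s = 1 / (c₃ * κ s) ∧
      m₂ s = (deriv κ s - c₃ * (κ s) ^ 3 * (s + c₀)) / (c₃ * (κ s) ^ 2 * τ s) ∧
      HasDerivAt (fun x => (deriv κ x - c₃ * (κ x) ^ 3 * (x + c₀)) / (c₃ * (κ x) ^ 2 * τ x))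
        (-(τ s) / (c₃ * κ s)) s := by
  -- basic differentiability facts
  have hyD : ∀ s ∈ I, HasDerivAt y (deriv y s) s := fun s hs =>
    ((hy.differentiableOn (by norm_num)).differentiableAt (hIopen.mem_nhds hs)).hasDerivAt
  have hzD : ∀ s ∈ I, HasDerivAt z (deriv z s) s := fun s hs =>
    ((hz.differentiableOn (by norm_num)).differentiableAt (hIopen.mem_nhds hs)).hasDerivAt
  have hy1C : ContDiffOn ℝ 2 (deriv y) I := hy.deriv_of_isOpen hIopen (by norm_num)
  have hz1C : ContDiffOn ℝ 2 (deriv z) I := hz.deriv_of_isOpen hIopen (by norm_num)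
  have hy2C : ContDiffOn ℝ 1 (deriv (deriv y)) I := hy1C.deriv_of_isOpen hIopen (by norm_num)
  have hz2C : ContDiffOn ℝ 1 (deriv (deriv z)) I := hz1C.deriv_of_isOpen hIopen (by norm_num)
  have hy1D : ∀ s ∈ I, HasDerivAt (deriv y) (deriv (deriv y) s) s := fun s hs =>
    ((hy1C.differentiableOn (by norm_num)).differentiableAt (hIopen.mem_nhds hs)).hasDerivAt
  have hz1D : ∀ s ∈ I, HasDerivAt (deriv z) (deriv (deriv z) s) s := fun s hs =>
    ((hz1C.differentiableOn (by norm_num)).differentiableAt (hIopen.mem_nhds hs)).hasDerivAt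
  have hy2D : ∀ s ∈ I, HasDerivAt (deriv (deriv y)) (deriv (deriv (deriv y)) s) s := fun s hs =>
    ((hy2C.differentiableOn (by norm_num)).differentiableAt (hIopen.mem_nhds hs)).hasDerivAt
  have hz2D : ∀ s ∈ I, HasDerivAt (deriv (deriv z)) (deriv (deriv (deriv z)) s) s := fun s hs =>
    ((hz2C.differentiableOn (by norm_num)).differentiableAt (hIopen.mem_nhds hs)).hasDerivAt
  have hκD : ∀ s ∈ I, HasDerivAt κ (deriv κ s) s := fun s hs =>
    ((hκC1.differentiableOn (by norm_num)).differentiableAt (hIopen.mem_nhds hs)).hasDerivAt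
  have hκpos : ∀ s ∈ I, 0 < κ s := fun s hs => by
    rw [hκ s hs]; exact Real.sqrt_pos.2 (abs_pos.2 (hadm s hs))
  have hκsq : ∀ s ∈ I, (κ s) ^ 2 = ε * ((deriv (deriv y) s) ^ 2 - (deriv (deriv z) s) ^ 2) :=
    fun s hs => by rw [hκ s hs, Real.sq_sqrt (abs_nonneg _), hεdef s hs]
  have he2 : ε ^ 2 = 1 := by rcases hε with h | h <;> rw [h] <;> norm_num
  -- component equations
  have hcomp : ∀ s ∈ I, m₀ s = s ∧
      κ s * (y s - s * deriv y s) =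
        m₁ s * deriv (deriv y) s + ε * (m₂ s * deriv (deriv z) s) ∧
      κ s * (z s - s * deriv z s) =
        m₁ s * deriv (deriv z) s + ε * (m₂ s * deriv (deriv y) s) := by
    intro s hs
    have h := hdecomp s hs
    rw [hT s hs, hN s hs, hB s hs] at h
    simp only [Prod.smul_mk, smul_eq_mul, Prod.mk_add_mk, Prod.mk.injEq, mul_one, mul_zero,
      add_zero, zero_add] at h
    obtain ⟨h0, h1, h2⟩ := h
    have hk := (hκpos s hs).ne'
    rw [← h0] at h1 h2
    field_simp at h1 h2
    refine ⟨h0.symm, by linear_combination h1, by linear_combination h2⟩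
  have hc0 : c₀ = 0 := by
    obtain ⟨s0, hs0, -⟩ := hInondeg
    have h1 := (hcomp s0 hs0).1
    have h2 := hm₀eq s0 hs0
    rw [h1] at h2; linarith
  subst hc0
  have hne' : ∀ s ∈ I, s ≠ 0 := fun s hs => by simpa using hne s hs
  -- the Frenet-type ODEs plus the value of m₁
  have hODE : ∀ s ∈ I,
      (deriv m₁ s + m₂ s * τ s + s * κ s = 0 ∧ deriv m₂ s = -(m₁ s * τ s)) ∧
        m₁ s = 1 / (c₃ * κ s) := by
    intro s hs
    have hk := (hκpos s hs).ne'
    have hE1 := (hcomp s hs).2.1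
    have hE2 := (hcomp s hs).2.2
    -- derivative identity D1
    have hf1 : HasDerivAt
        (fun x => m₁ x * deriv (deriv y) x + ε * (m₂ x * deriv (deriv z) x))
        (deriv m₁ s * deriv (deriv y) s + m₁ s * deriv (deriv (deriv y)) s +
          ε * (deriv m₂ s * deriv (deriv z) s + m₂ s * deriv (deriv (deriv z)) s)) s :=
      (((hm₁ s hs).hasDerivAt.mul (hy2D s hs)).add
        (((hm₂ s hs).hasDerivAt.mul (hz2D s hs)).const_mul ε))
    have hg1 : HasDerivAt (fun x => κ x * (y x - x * deriv y x))
        (deriv κ s * (y s - s * deriv y s) +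
          κ s * (deriv y s - (1 * deriv y s + s * deriv (deriv y) s))) s :=
      (hκD s hs).mul ((hyD s hs).sub ((hasDerivAt_id s).mul (hy1D s hs)))
    have hfg1 : (fun x => m₁ x * deriv (deriv y) x + ε * (m₂ x * deriv (deriv z) x)) =ᶠ[nhds s]
        (fun x => κ x * (y x - x * deriv y x)) :=
      Filter.eventuallyEq_of_mem (hIopen.mem_nhds hs) (fun x hx => ((hcomp x hx).2.1).symm)
    have hD1 := hf1.unique (hg1.congr_of_eventuallyEq hfg1)
    -- derivative identity D2
    have hf2 : HasDerivAt
        (fun x => m₁ x * deriv (deriv z) x + ε * (m₂ x * deriv (deriv y) x))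
        (deriv m₁ s * deriv (deriv z) s + m₁ s * deriv (deriv (deriv z)) s +
          ε * (deriv m₂ s * deriv (deriv y) s + m₂ s * deriv (deriv (deriv y)) s)) s :=
      (((hm₁ s hs).hasDerivAt.mul (hz2D s hs)).add
        (((hm₂ s hs).hasDerivAt.mul (hy2D s hs)).const_mul ε))
    have hg2 : HasDerivAt (fun x => κ x * (z x - x * deriv z x))
        (deriv κ s * (z s - s * deriv z s) +
          κ s * (deriv z s - (1 * deriv z s + s * deriv (deriv z) s))) s :=
      (hκD s hs).mul ((hzD s hs).sub ((hasDerivAt_id s).mul (hz1D s hs)))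
    have hfg2 : (fun x => m₁ x * deriv (deriv z) x + ε * (m₂ x * deriv (deriv y) x)) =ᶠ[nhds s]
        (fun x => κ x * (z x - x * deriv z x)) :=
      Filter.eventuallyEq_of_mem (hIopen.mem_nhds hs) (fun x hx => ((hcomp x hx).2.2).symm)
    have hD2 := hf2.unique (hg2.congr_of_eventuallyEq hfg2)
    -- derivative identity D3
    have hf3 : HasDerivAt (fun x => (κ x) ^ 2) ((2 : ℕ) * κ s ^ 1 * deriv κ s) s :=
      (hκD s hs).pow 2
    have hg3 : HasDerivAt
        (fun x => ε * ((deriv (deriv y) x) ^ 2 - (deriv (deriv z) x) ^ 2))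
        (ε * ((2 : ℕ) * deriv (deriv y) s ^ 1 * deriv (deriv (deriv y)) s -
          (2 : ℕ) * deriv (deriv z) s ^ 1 * deriv (deriv (deriv z)) s)) s :=
      (((hy2D s hs).pow 2).sub ((hz2D s hs).pow 2)).const_mul ε
    have hfg3 : (fun x => (κ x) ^ 2) =ᶠ[nhds s]
        (fun x => ε * ((deriv (deriv y) x) ^ 2 - (deriv (deriv z) x) ^ 2)) :=
      Filter.eventuallyEq_of_mem (hIopen.mem_nhds hs) (fun x hx => hκsq x hx)
    have hD3 := hf3.unique (hg3.congr_of_eventuallyEq hfg3)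
    -- derivative identity D4 from the constant-ratio condition
    have hm0D : HasDerivAt m₀ 1 s := by
      have h1 : HasDerivAt (fun x : ℝ => x + 0) 1 s := (hasDerivAt_id s).add_const 0
      exact h1.congr_of_eventuallyEq
        (Filter.eventuallyEq_of_mem (hIopen.mem_nhds hs) (fun x hx => hm₀eq x hx))
    have hf4 : HasDerivAt (fun x => (m₀ x) ^ 2) ((2 : ℕ) * m₀ s ^ 1 * 1) s := hm0D.pow 2
    have hg4 : HasDerivAt (fun x => c₃ * ((m₂ x) ^ 2 - (m₁ x) ^ 2))
        (c₃ * ((2 : ℕ) * m₂ s ^ 1 * deriv m₂ s - (2 : ℕ) * m₁ s ^ 1 * deriv m₁ s)) s :=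
      (((hm₂ s hs).hasDerivAt.pow 2).sub ((hm₁ s hs).hasDerivAt.pow 2)).const_mul c₃
    have hfg4 : (fun x => (m₀ x) ^ 2) =ᶠ[nhds s]
        (fun x => c₃ * ((m₂ x) ^ 2 - (m₁ x) ^ 2)) :=
      Filter.eventuallyEq_of_mem (hIopen.mem_nhds hs) (fun x hx => hratio x hx)
    have hD4 := hf4.unique (hg4.congr_of_eventuallyEq hfg4)
    push_cast at hD3 hD4
    -- algebra
    have hD1k : κ s * (deriv m₁ s * deriv (deriv y) s + m₁ s * deriv (deriv (deriv y)) s +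
        ε * (deriv m₂ s * deriv (deriv z) s + m₂ s * deriv (deriv (deriv z)) s)) =
        deriv κ s * (m₁ s * deriv (deriv y) s + ε * (m₂ s * deriv (deriv z) s)) -
          (κ s) ^ 2 * (s * deriv (deriv y) s) := by
      linear_combination κ s * hD1 + deriv κ s * hE1
    have hD2k : κ s * (deriv m₁ s * deriv (deriv z) s + m₁ s * deriv (deriv (deriv z)) s +
        ε * (deriv m₂ s * deriv (deriv y) s + m₂ s * deriv (deriv (deriv y)) s)) =
        deriv κ s * (m₁ s * deriv (deriv z) s + ε * (m₂ s * deriv (deriv y) s)) -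
          (κ s) ^ 2 * (s * deriv (deriv z) s) := by
      linear_combination κ s * hD2 + deriv κ s * hE2
    have hab : (deriv (deriv y) s) ^ 2 - (deriv (deriv z) s) ^ 2 = ε * (κ s) ^ 2 := by
      linear_combination (-ε) * hκsq s hs +
        (-((deriv (deriv y) s) ^ 2 - (deriv (deriv z) s) ^ 2)) * he2
    have haa : ε * (deriv (deriv y) s * deriv (deriv (deriv y)) s -
        deriv (deriv z) s * deriv (deriv (deriv z)) s) = κ s * deriv κ s := by
      linear_combination (-(1 : ℝ) / 2) * hD3
    have hw : τ s * (κ s) ^ 2 =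
        deriv (deriv y) s * deriv (deriv (deriv z)) s -
          deriv (deriv (deriv y)) s * deriv (deriv z) s := by
      rw [hτ s hs]; field_simp
    have hkey2 : κ s * (m₁ s * (deriv (deriv y) s * deriv (deriv (deriv z)) s -
        deriv (deriv (deriv y)) s * deriv (deriv z) s) + deriv m₂ s * (κ s) ^ 2) =
        κ s * 0 := by
      linear_combination deriv (deriv y) s * hD2k - deriv (deriv z) s * hD1k +
        (deriv κ s * ε * m₂ s - κ s * ε * deriv m₂ s) * hab + (-(κ s * m₂ s)) * haa +
        (deriv κ s * m₂ s * (κ s) ^ 2 - (κ s) ^ 3 * deriv m₂ s) * he2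
    have h2 := mul_left_cancel₀ hk hkey2
    have hODE2 : deriv m₂ s = -(m₁ s * τ s) := by
      rw [hτ s hs]
      field_simp
      linear_combination h2
    have hkey1 : κ s * ((κ s) ^ 2 * deriv m₁ s + m₂ s * (deriv (deriv y) s *
        deriv (deriv (deriv z)) s - deriv (deriv (deriv y)) s * deriv (deriv z) s) +
        (κ s) ^ 3 * s) = κ s * 0 := by
      linear_combination ε * deriv (deriv y) s * hD1k - ε * deriv (deriv z) s * hD2k +
        (-(ε * κ s * deriv m₁ s) + ε * deriv κ s * m₁ s - ε * (κ s) ^ 2 * s) * hab +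
        (-(κ s * m₁ s)) * haa +
        (-((κ s) ^ 3 * deriv m₁ s) - κ s * m₂ s * (deriv (deriv y) s *
          deriv (deriv (deriv z)) s - deriv (deriv (deriv y)) s * deriv (deriv z) s) +
          deriv κ s * m₁ s * (κ s) ^ 2 - (κ s) ^ 4 * s) * he2
    have h1 := mul_left_cancel₀ hk hkey1
    have hODE1 : deriv m₁ s + m₂ s * τ s + s * κ s = 0 := by
      have hq : (deriv m₁ s + m₂ s * τ s + s * κ s) * (κ s) ^ 2 = 0 := by
        linear_combination h1 + m₂ s * hw
      rcases mul_eq_zero.1 hq with h | h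
      · exact h
      · exact absurd h (pow_ne_zero 2 hk)
    have hM0 := (hcomp s hs).1
    have hM1 : m₁ s = 1 / (c₃ * κ s) := by
      have h5 : s * (c₃ * (m₁ s * κ s)) = s * 1 := by
        rw [hM0] at hD4
        linear_combination (-(1 : ℝ) / 2) * hD4 + (c₃ * m₁ s) * hODE1 +
          (-(c₃ * m₂ s)) * hODE2
      have h6 := mul_left_cancel₀ (hne' s hs) h5
      field_simp
      linear_combination h6
    exact ⟨⟨hODE1, hODE2⟩, hM1⟩
  -- value of m₂
  have hM2 : ∀ s ∈ I, m₂ s =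
      (deriv κ s - c₃ * κ s ^ 3 * (s + 0)) / (c₃ * κ s ^ 2 * τ s) := by
    intro s hs
    have hk := (hκpos s hs).ne'
    have hck : c₃ * κ s ≠ 0 := mul_ne_zero hc₃ hk
    have hg : HasDerivAt (fun x => (c₃ * κ x)⁻¹)
        (-(c₃ * deriv κ s) / (c₃ * κ s) ^ 2) s := ((hκD s hs).const_mul c₃).inv hck
    have hgm : m₁ =ᶠ[nhds s] (fun x => (c₃ * κ x)⁻¹) :=
      Filter.eventuallyEq_of_mem (hIopen.mem_nhds hs) (fun x hx => by
        rw [(hODE x hx).2, one_div])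
    have hm1d := ((hm₁ s hs).hasDerivAt).unique (hg.congr_of_eventuallyEq hgm)
    have hODE1 := (hODE s hs).1.1
    rw [eq_div_iff (mul_ne_zero (mul_ne_zero hc₃ (pow_ne_zero 2 hk)) (hτ0 s hs))]
    field_simp at hm1d
    have h7 : c₃ * (deriv m₁ s * (c₃ * κ s ^ 2)) = c₃ * (-(deriv κ s)) := by
      linear_combination c₃ * hm1d
    have hm1d2 := mul_left_cancel₀ hc₃ h7
    linear_combination (c₃ * κ s ^ 2) * hODE1 - hm1d2
  intro s hs
  have hk := (hκpos s hs).ne'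
  refine ⟨(hODE s hs).2, hM2 s hs, ?_⟩
  have hval : deriv m₂ s = -(τ s) / (c₃ * κ s) := by
    rw [(hODE s hs).1.2, (hODE s hs).2]
    field_simp
  have hm2d : HasDerivAt m₂ (-(τ s) / (c₃ * κ s)) s := hval ▸ (hm₂ s hs).hasDerivAt
  exact hm2d.congr_of_eventuallyEq
    (Filter.eventuallyEq_of_mem (hIopen.mem_nhds hs) (fun x hx => (hM2 x hx).symm))
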